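/- Let P ∈ ℝ^K have all entries strictly positive with ∑_k P_k = P_T, let s = P / P_T, and let R > 0. Then R_k(P) = R for every k if and only if s satisfies the linear system s / (2^R − 1) = A s + b, and in that case (since 𝟙ᵀs = 1) s is an eigenvector of B = A + b𝟙ᵀ with eigenvalue 1/(2^R − 1), i.e., B s = s / (2^R − 1). -/

import Mathlib

/-- Achievable rate of user `k` in downlink NOMA:
`R_k(P) = log₂(1 + P_k g_k / (g_k ∑_{j<k} P_j + 1))`
(for `k = 0`, i.e. user 1, the sum is empty and this is `log₂(1 + P_1 g_1)`). -/
noncomputable def rate {K : ℕ} (g P : Fin K → ℝ) (k : Fin K) : ℝ :=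
  Real.logb 2
    (1 + P k * g k / (g k * (∑ j ∈ Finset.univ.filter (fun j => j < k), P j) + 1))

/-- The strictly lower-triangular all-ones matrix `A`, `A_{ik} = 1` iff `k < i`. -/
def Amat (K : ℕ) : Matrix (Fin K) (Fin K) ℝ :=
  Matrix.of fun i k => if k < i then 1 else 0

/-- The vector `b` with entries `b_k = 1/(P_T g_k)`. -/
noncomputable def bvec (K : ℕ) (g : Fin K → ℝ) (P_T : ℝ) : Fin K → ℝ :=
  fun k => 1 / (P_T * g k)

/-- The matrix `B = A + b 𝟙ᵀ`, i.e. `B_{ik} = A_{ik} + b_i`. -/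
noncomputable def Bmat (K : ℕ) (g : Fin K → ℝ) (P_T : ℝ) : Matrix (Fin K) (Fin K) ℝ :=
  Amat K + Matrix.of fun i _ => bvec K g P_T i

theorem stmt_3 (K : ℕ) (hK : 1 ≤ K) (g : Fin K → ℝ)
    (hgpos : ∀ k, 0 < g k) (hgdec : StrictAnti g)
    (P_T : ℝ) (hPT : 0 < P_T)
    (P : Fin K → ℝ) (hPpos : ∀ k, 0 < P k) (hPsum : ∑ k, P k = P_T)
    (R : ℝ) (hR : 0 < R) :
    ((∀ k, rate g P k = R) ↔
        ((2 : ℝ) ^ R - 1)⁻¹ • (fun k => P k / P_T) =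
          (Amat K).mulVec (fun k => P k / P_T) + bvec K g P_T) ∧
      ((∀ k, rate g P k = R) →
        (Bmat K g P_T).mulVec (fun k => P k / P_T) =
          ((2 : ℝ) ^ R - 1)⁻¹ • (fun k => P k / P_T)) := by
  have hc : (0:ℝ) < (2:ℝ) ^ R - 1 := by
    have : (1:ℝ) < (2:ℝ) ^ R := by
      have := Real.one_lt_rpow_iff_of_pos (x := 2) (by norm_num) (y := R)
      simpa [hR] using this.mpr (Or.inl ⟨by norm_num, hR⟩)
    linarith
  -- Amat mulVec formula
  have hA : ∀ k : Fin K, (Amat K).mulVec (fun k => P k / P_T) k =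
      (∑ j ∈ Finset.univ.filter (fun j => j < k), P j) / P_T := by
    intro k
    simp only [Amat, Matrix.mulVec, Matrix.of_apply, dotProduct]
    rw [Finset.sum_filter, Finset.sum_div]
    apply Finset.sum_congr rfl
    intro j _
    by_cases h : j < k <;> simp [h]
  have key : ∀ k : Fin K, rate g P k = R ↔
      ((2:ℝ) ^ R - 1)⁻¹ * (P k / P_T) =
        (∑ j ∈ Finset.univ.filter (fun j => j < k), P j) / P_T + 1 / (P_T * g k) := by
    intro k
    set S := ∑ j ∈ Finset.univ.filter (fun j => j < k), P j with hS
    have hSnn : 0 ≤ S := Finset.sum_nonneg fun j _ => (hPpos j).le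
    have hD : (0:ℝ) < g k * S + 1 := by nlinarith [hgpos k]
    have hxpos : (0:ℝ) < 1 + P k * g k / (g k * S + 1) := by
      have : 0 ≤ P k * g k / (g k * S + 1) :=
        div_nonneg (by nlinarith [hPpos k, hgpos k]) hD.le
      linarith
    rw [rate, ← hS, Real.logb_eq_iff_rpow_eq (by norm_num) (by norm_num) hxpos]
    rw [show ((2:ℝ) ^ R = 1 + P k * g k / (g k * S + 1)) ↔
        (P k * g k = ((2:ℝ)^R - 1) * (g k * S + 1)) by
      constructor <;> intro h
      · have := hD.ne'
        field_simp at h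
        nlinarith
      · field_simp
        nlinarith]
    have hg : (g k) ≠ 0 := (hgpos k).ne'
    have hPT' : P_T ≠ 0 := hPT.ne'
    constructor <;> intro h
    · field_simp at h ⊢
      linear_combination h
    · field_simp at h
      apply mul_right_cancel₀ (mul_ne_zero hPT' hPT')
      linear_combination P_T * P_T * h
  have hiff : (∀ k, rate g P k = R) ↔
      ((2 : ℝ) ^ R - 1)⁻¹ • (fun k => P k / P_T) =
        (Amat K).mulVec (fun k => P k / P_T) + bvec K g P_T := by
    rw [funext_iff]
    apply forall_congr'
    intro k
    rw [key k]
    simp [Pi.add_apply, Pi.smul_apply, smul_eq_mul, hA k, bvec]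
  refine ⟨hiff, fun h => ?_⟩
  have heq := hiff.mp h
  have hsum : ∑ k, P k / P_T = 1 := by
    rw [← Finset.sum_div, hPsum, div_self hPT.ne']
  funext i
  have : (Bmat K g P_T).mulVec (fun k => P k / P_T) i =
      (Amat K).mulVec (fun k => P k / P_T) i + bvec K g P_T i := by
    simp only [Bmat, Matrix.mulVec, dotProduct, Matrix.add_apply,
      Matrix.of_apply, bvec, add_mul, Finset.sum_add_distrib, ← Finset.mul_sum, hsum, mul_one]
  rw [this, ← Pi.add_apply, ← heq]
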